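/- Let r be a reward function that is strictly concave and differentiable on [0,∞), so that its derivative r' is continuous and strictly decreasing with limit L := lim_{x→∞} r'(x) ≥ 0. Suppose there exists s with 1 < s and s·L < r'(0) such that the function κ_s, defined on [τ_s, ∞) by the relation r'(κ_s(x)) = s·r'(x) (where τ_s is the unique point with r'(τ_s) = r'(0)/s), is convex. Then r is strictly increasing on [0,∞), r' is continuous and strictly decreasing on [0,∞), and L = 0, i.e., r'(x) → 0 as x → ∞. -/

import Mathlib

open Set Filter
open Topology

/-- **Properties of a regular reward function** (Proposition 5). Let `r` be a reward
function that is strictly concave and differentiable on `[0, ∞)` with derivative `r'`,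
where `r'` tends to `L` at `+∞`. Suppose there is `s` with `1 < s` and `s * L < r' 0`
such that the function `κ_s` (defined on `[τ_s, ∞)` by `r' (κ_s x) = s * r' x`, where
`τ_s` is the point with `r' τ_s = r' 0 / s`) is convex. Then `r` is strictly increasing
on `[0, ∞)`, `r'` is continuous and strictly decreasing on `[0, ∞)`, and `L = 0`. -/
theorem regular_reward_properties
    (r r' : ℝ → ℝ)
    (hr_zero : r 0 = 0)
    (hr_nonneg : ∀ x : ℝ, 0 ≤ x → 0 ≤ r x)
    (hr_mono : MonotoneOn r (Ici (0 : ℝ)))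
    (hr_lip : ∃ K : NNReal, LipschitzOnWith K r (Ici (0 : ℝ)))
    (hr_concave : StrictConcaveOn ℝ (Ici (0 : ℝ)) r)
    (hr_deriv : ∀ x : ℝ, 0 ≤ x → HasDerivWithinAt r (r' x) (Ici (0 : ℝ)) x)
    (L : ℝ) (hL : Tendsto r' atTop (nhds L))
    (s : ℝ) (hs : 1 < s) (hsL : s * L < r' 0)
    (τ : ℝ) (hτ_nonneg : 0 ≤ τ) (hτ_spec : r' τ = r' 0 / s)
    (κ : ℝ → ℝ)
    (hκ_nonneg : ∀ x : ℝ, τ ≤ x → 0 ≤ κ x)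
    (hκ_spec : ∀ x : ℝ, τ ≤ x → r' (κ x) = s * r' x)
    (hκ_convex : ConvexOn ℝ (Ici τ) κ) :
    StrictMonoOn r (Ici (0 : ℝ)) ∧
      ContinuousOn r' (Ici (0 : ℝ)) ∧
      StrictAntiOn r' (Ici (0 : ℝ)) ∧
      L = 0 := by
  obtain ⟨K, hK⟩ := hr_lip
  have hrc : ContinuousOn r (Ici (0 : ℝ)) := hK.continuousOn
  -- The derivative dominates forward slopes
  have hA : ∀ a b : ℝ, 0 ≤ a → a < b → (r b - r a) / (b - a) ≤ r' a := by
    intro a b ha hab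
    have hb0 : (0 : ℝ) ≤ b := le_trans ha hab.le
    have htend : Tendsto (slope r a) (𝓝[Ici (0:ℝ) \ {a}] a) (𝓝 (r' a)) :=
      hasDerivWithinAt_iff_tendsto_slope.mp (hr_deriv a ha)
    have hne : (𝓝[Ici (0:ℝ) \ {a}] a).NeBot := by
      refine Filter.neBot_of_le (f := 𝓝[Ioi a] a)
        (nhdsWithin_mono _ (fun t ht => ⟨le_trans ha (le_of_lt ht), ne_of_gt ht⟩))
    refine ge_of_tendsto htend ?_
    have hIb : Iio b ∈ 𝓝[Ici (0:ℝ) \ {a}] a := nhdsWithin_le_nhds (Iio_mem_nhds hab)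
    filter_upwards [hIb, self_mem_nhdsWithin] with t htb hts
    obtain ⟨ht0, hta⟩ := hts
    have hkey := hr_concave.secant_strict_mono (a := a) (x := t) (y := b)
      ha ht0 hb0 hta (ne_of_gt hab) htb
    rw [slope_def_field]
    exact hkey.le
  -- The derivative is dominated by backward slopes
  have hB : ∀ a b : ℝ, 0 ≤ a → a < b → r' b ≤ (r b - r a) / (b - a) := by
    intro a b ha hab
    have hb0 : (0 : ℝ) ≤ b := le_trans ha hab.le
    have htend : Tendsto (slope r b) (𝓝[Ici (0:ℝ) \ {b}] b) (𝓝 (r' b)) :=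
      hasDerivWithinAt_iff_tendsto_slope.mp (hr_deriv b hb0)
    have hne : (𝓝[Ici (0:ℝ) \ {b}] b).NeBot := by
      refine Filter.neBot_of_le (f := 𝓝[Ioi b] b)
        (nhdsWithin_mono _ (fun t ht => ⟨le_trans hb0 (le_of_lt ht), ne_of_gt ht⟩))
    refine le_of_tendsto htend ?_
    have hIb : Ioi a ∈ 𝓝[Ici (0:ℝ) \ {b}] b := nhdsWithin_le_nhds (Ioi_mem_nhds hab)
    filter_upwards [hIb, self_mem_nhdsWithin] with t hat hts
    obtain ⟨ht0, htb⟩ := hts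
    have hkey := hr_concave.secant_strict_mono (a := b) (x := a) (y := t)
      hb0 ha ht0 (ne_of_lt hab) htb hat
    have hsym : (r a - r b) / (a - b) = (r b - r a) / (b - a) := by
      rw [← neg_div_neg_eq]; ring_nf
    rw [slope_def_field]
    rw [hsym] at hkey
    exact hkey.le
  -- r' is strictly antitone
  have hAnti : StrictAntiOn r' (Ici (0 : ℝ)) := by
    intro a ha b hb hab
    have ham : a < (a + b) / 2 := by linarith
    have hmb : (a + b) / 2 < b := by linarith
    have hm0 : (0 : ℝ) ≤ (a + b) / 2 := by
      have : (0:ℝ) ≤ a := ha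
      linarith
    have h1 := hB ((a + b) / 2) b hm0 hmb
    have h2 := hA a ((a + b) / 2) ha ham
    have h3 := hr_concave.slope_anti_adjacent ha hb ham hmb
    linarith
  -- r' is nonnegative on [0,∞)
  have hr'_nonneg : ∀ x : ℝ, 0 ≤ x → 0 ≤ r' x := by
    intro x hx
    have h1 := hA x (x + 1) hx (lt_add_one x)
    have h2 : r x ≤ r (x + 1) := hr_mono hx (by simp; linarith) (by linarith)
    have h3 : (0:ℝ) ≤ (r (x+1) - r x) / (x + 1 - x) := by
      apply div_nonneg <;> linarith
    linarith
  have hL0 : 0 ≤ L :=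
    ge_of_tendsto hL (eventually_atTop.2 ⟨0, fun x hx => hr'_nonneg x hx⟩)
  -- r' x > L for all x ≥ 0
  have hgtL : ∀ x : ℝ, 0 ≤ x → L < r' x := by
    intro x hx
    have h1 : L ≤ r' (x + 1) := by
      refine le_of_tendsto hL (eventually_atTop.2 ⟨x + 1, fun t ht => ?_⟩)
      exact hAnti.antitoneOn (by simp; linarith) (le_trans (by linarith) ht) ht
    have h2 : r' (x + 1) < r' x := hAnti hx (by simp; linarith) (lt_add_one x)
    linarith
  -- r is strictly monotone
  have hrmono : StrictMonoOn r (Ici (0 : ℝ)) := by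
    intro a ha b hb hab
    have ha' : (0:ℝ) ≤ a := ha
    have hcont : ContinuousOn r (Icc a b) :=
      hrc.mono (fun x hx => le_trans ha' hx.1)
    have hderiv : ∀ x ∈ Ioo a b, HasDerivAt r (r' x) x := by
      intro x hx
      have hx0 : 0 < x := lt_of_le_of_lt ha' hx.1
      exact (hr_deriv x hx0.le).hasDerivAt (Ici_mem_nhds hx0)
    obtain ⟨c, hc, hceq⟩ := exists_hasDerivAt_eq_slope r r' hab hcont hderiv
    have hcpos : 0 < r' c := lt_of_le_of_lt hL0 (hgtL c (le_trans ha' hc.1.le))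
    have hba : 0 < b - a := sub_pos.2 hab
    have := mul_pos hcpos hba
    rw [hceq, div_mul_cancel₀ _ (ne_of_gt hba)] at this
    linarith
  -- Darboux property of r'
  have darboux : ∀ a b m : ℝ, 0 ≤ a → a ≤ b → r' b < m → m < r' a →
      ∃ c ∈ Ioo a b, r' c = m := by
    intro a b m ha hab h1 h2
    have hf : ∀ x ∈ Icc a b, HasDerivWithinAt r (r' x) (Icc a b) x := fun x hx =>
      (hr_deriv x (le_trans ha hx.1)).mono (fun y hy => le_trans ha hy.1)
    obtain ⟨c, hc, hceq⟩ := exists_hasDerivWithinAt_eq_of_lt_of_gt hab hf h2 h1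
    exact ⟨c, hc, hceq⟩
  -- continuity of r' via monotone + Darboux
  have hg : StrictMonoOn (fun x => -(r' x)) (Ici (0 : ℝ)) :=
    fun a ha b hb hab => neg_lt_neg (hAnti ha hb hab)
  have hbetween_r : ∀ a : ℝ, 0 ≤ a → ∀ b > -(r' a),
      ∃ c ∈ Ici (0:ℝ), -(r' c) ∈ Ioc (-(r' a)) b := by
    intro a ha b hb
    have hta : a < a + 1 := lt_add_one a
    have ht0 : (0:ℝ) ≤ a + 1 := by linarith
    have hlt : r' (a + 1) < r' a := hAnti ha ht0 hta
    by_cases h : -(r' (a + 1)) ≤ b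
    · exact ⟨a + 1, ht0, ⟨neg_lt_neg hlt, h⟩⟩
    · push_neg at h
      obtain ⟨c, hc, hceq⟩ := darboux a (a + 1) (-b) ha hta.le (by linarith) (by linarith)
      refine ⟨c, le_trans ha hc.1.le, ?_⟩
      rw [hceq]
      exact ⟨by linarith, by linarith⟩
  have hbetween_l : ∀ a : ℝ, 0 < a → ∀ b < -(r' a),
      ∃ c ∈ Ici (0:ℝ), -(r' c) ∈ Ico b (-(r' a)) := by
    intro a ha b hb
    have ht0 : (0:ℝ) ≤ a / 2 := by linarith
    have hta : a / 2 < a := by linarith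
    have hlt : r' a < r' (a / 2) := hAnti ht0 ha.le hta
    by_cases h : b ≤ -(r' (a / 2))
    · exact ⟨a / 2, ht0, ⟨h, neg_lt_neg hlt⟩⟩
    · push_neg at h
      obtain ⟨c, hc, hceq⟩ := darboux (a / 2) a (-b) ht0 hta.le (by linarith) (by linarith)
      refine ⟨c, le_trans ht0 hc.1.le, ?_⟩
      rw [hceq]
      exact ⟨by linarith, by linarith⟩
  have hcontg : ContinuousOn (fun x => -(r' x)) (Ici (0:ℝ)) := by
    intro a ha
    rcases eq_or_lt_of_le (show (0:ℝ) ≤ a from ha) with rfl | hpos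
    · exact hg.continuousWithinAt_right_of_exists_between self_mem_nhdsWithin
        (hbetween_r 0 le_rfl)
    · exact (hg.continuousAt_of_exists_between (Ici_mem_nhds hpos)
        (hbetween_l a hpos) (hbetween_r a ha)).continuousWithinAt
  have hcontr' : ContinuousOn r' (Ici (0:ℝ)) := by
    have := hcontg.neg
    exact this.congr (fun x _ => by simp)
  -- L = 0
  have hLzero : L = 0 := by
    by_contra hne
    have hLpos : 0 < L := lt_of_le_of_ne hL0 (Ne.symm hne)
    have hsL' : L < s * L := by nlinarith
    have hev : ∀ᶠ x in atTop, r' x < s * L := hL.eventually_lt_const hsL'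
    obtain ⟨x1, hx1ge, hx1lt⟩ := ((eventually_ge_atTop (0:ℝ)).and hev).exists
    obtain ⟨c, hc, hceq⟩ := darboux 0 x1 (s * L) le_rfl hx1ge hx1lt hsL
    have hc0 : 0 < c := hc.1
    -- κ is bounded above by c
    have hbound : ∀ x : ℝ, τ ≤ x → κ x < c := by
      intro x hx
      by_contra hcon
      push_neg at hcon
      have hx0 : 0 ≤ x := le_trans hτ_nonneg hx
      have h1 : r' (κ x) ≤ r' c := by
        rcases eq_or_lt_of_le hcon with h | h
        · rw [← h]
        · exact (hAnti hc0.le (hκ_nonneg x hx) h).le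
      rw [hκ_spec x hx, hceq] at h1
      have h2 : L < r' x := hgtL x hx0
      nlinarith
    -- κ is nondecreasing
    have hmono : κ τ ≤ κ (τ + 1) := by
      by_contra hcon
      push_neg at hcon
      have h1 := hAnti (hκ_nonneg (τ + 1) (by linarith)) (hκ_nonneg τ le_rfl) hcon
      rw [hκ_spec τ le_rfl, hκ_spec (τ + 1) (by linarith)] at h1
      have h2 : r' (τ + 1) < r' τ := hAnti hτ_nonneg (by simp; linarith) (lt_add_one τ)
      nlinarith
    -- κ is nonincreasing (from convexity and boundedness)
    have hanti : κ (τ + 1) ≤ κ τ := by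
      by_contra hcon
      push_neg at hcon
      have hd : 0 < κ (τ + 1) - κ τ := sub_pos.2 hcon
      set d : ℝ := κ (τ + 1) - κ τ with hddef
      have hcb : 0 < c - κ (τ + 1) := sub_pos.2 (hbound (τ + 1) (by linarith))
      set w : ℝ := τ + 1 + (c - κ (τ + 1)) / d + 1 with hwdef
      have hdivpos : 0 < (c - κ (τ + 1)) / d := div_pos hcb hd
      have hbw : τ + 1 < w := by rw [hwdef]; linarith
      have hwτ : w ∈ Ici τ := by simp only [mem_Ici]; linarith
      have hslope := hκ_convex.slope_mono_adjacent (self_mem_Ici) hwτ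
        (lt_add_one τ) hbw
      have hwb : 0 < w - (τ + 1) := sub_pos.2 hbw
      have hineq : κ (τ + 1) + d * (w - (τ + 1)) ≤ κ w := by
        have h1 : (κ (τ + 1) - κ τ) / (τ + 1 - τ) = d := by
          rw [hddef]; ring_nf
        rw [h1] at hslope
        have h2 : d * (w - (τ + 1)) ≤ κ w - κ (τ + 1) :=
          (le_div_iff₀ hwb).mp hslope
        linarith
      have hwval : κ w < c := hbound w hwτ
      have hcomp : d * (w - (τ + 1)) = (c - κ (τ + 1)) + d := by
        have : w - (τ + 1) = (c - κ (τ + 1)) / d + 1 := by rw [hwdef]; ring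
        rw [this, mul_add, mul_one, mul_div_cancel₀ _ (ne_of_gt hd)]
      rw [hcomp] at hineq
      linarith
    have heq : κ τ = κ (τ + 1) := le_antisymm hmono hanti
    have h1 := hκ_spec τ le_rfl
    have h2 := hκ_spec (τ + 1) (by linarith)
    rw [← heq, h1] at h2
    have h3 : r' (τ + 1) < r' τ := hAnti hτ_nonneg (by simp; linarith) (lt_add_one τ)
    nlinarith
  exact ⟨hrmono, hcontr', hAnti, hLzero⟩
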